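/- Let m ≥ 2 be an integer and let z be a complex number with |z| < (m-1)^{m-1}/m^m. Then the power series f(z) = ∑_{t=0}^∞ A_t(m,1) z^t converges absolutely and its sum satisfies f(z) = 1 + z·f(z)^m. -/

import Mathlib

/-- Fuss–Catalan number with integer parameter `m`:
`A_t(m,1) = (1/((m-1)t+1)) · C(mt, t)`, as a complex number. -/
noncomputable def fcInt (m t : ℕ) : ℂ :=
  (Nat.choose (m * t) t : ℂ) / (((m : ℂ) - 1) * t + 1)

open Finset

noncomputable def raney (m s t : ℕ) : ℝ :=
  if t = 0 then 1 else (s : ℝ) / (m * t + s) * (Nat.choose (m * t + s) t)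

lemma raney_zero (m s : ℕ) : raney m s 0 = 1 := by simp [raney]

lemma raney_of_ne (m s t : ℕ) (ht : t ≠ 0) :
    raney m s t = (s : ℝ) / (m * t + s) * (Nat.choose (m * t + s) t) := by
  simp [raney, ht]

lemma raney_formula (m s t : ℕ) (hs : s ≠ 0) :
    raney m s t = (s : ℝ) / (m * t + s) * (Nat.choose (m * t + s) t) := by
  rcases Nat.eq_zero_or_pos t with rfl | ht
  · simp [raney]
    rw [div_self (by exact_mod_cast hs)]
  · exact raney_of_ne m s t ht.ne'

lemma raney_rec (m s t : ℕ) (hm : 1 ≤ m) :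
    raney m (s + 1) (t + 1) = raney m s (t + 1) + raney m (s + m) t := by
  obtain ⟨N, hN⟩ : ∃ N, N = m * t + m + s := ⟨_, rfl⟩
  have e1 : m * (t + 1) + (s + 1) = N + 1 := by rw [hN]; ring
  have e2 : m * (t + 1) + s = N := by rw [hN]; ring
  have e3 : m * t + (s + m) = N := by rw [hN]; ring
  have hNr : (N : ℝ) = (m : ℝ) * t + m + s := by exact_mod_cast congrArg (Nat.cast : ℕ → ℝ) hN
  have h1 : ((N + 1).choose (t + 1) : ℝ) = (N.choose t : ℝ) + (N.choose (t + 1) : ℝ) := by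
    rw [Nat.choose_succ_succ]; push_cast; ring
  have htN : t ≤ N := by
    have := Nat.le_mul_of_pos_left t (show 0 < m by omega); omega
  have h2 : (N.choose (t + 1) : ℝ) * (t + 1) = (N.choose t : ℝ) * ((N : ℝ) - t) := by
    have h2' := Nat.choose_succ_right_eq N t
    have := congrArg (Nat.cast : ℕ → ℝ) h2'
    push_cast [Nat.cast_sub htN] at this
    linarith [this]
  have hN0 : ((N : ℕ) : ℝ) ≠ 0 := Nat.cast_ne_zero.mpr (by omega)
  have hN1 : ((N : ℕ) : ℝ) + 1 ≠ 0 := by positivity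
  have key : ((s : ℝ) + 1) * ((N + 1).choose (t + 1) : ℝ) * N
      = ((s : ℝ) * (N.choose (t + 1) : ℝ) + ((s : ℝ) + m) * (N.choose t : ℝ)) * ((N : ℝ) + 1) := by
    linear_combination (((s : ℝ) + 1) * N) * h1 + (m : ℝ) * h2
      + ((N.choose (t + 1) : ℝ) + (N.choose t : ℝ)) * hNr
  rw [raney_formula m (s+1) (t+1) (by omega), raney_of_ne m s (t+1) (by omega),
    raney_formula m (s+m) t (by omega), e1, e2, e3]
  push_cast
  rw [show (m : ℝ) * ((t : ℝ) + 1) + ((s : ℝ) + 1) = (N : ℝ) + 1 by rw [hNr]; ring,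
    show (m : ℝ) * ((t : ℝ) + 1) + (s : ℝ) = (N : ℝ) by rw [hNr]; ring,
    show (m : ℝ) * (t : ℝ) + ((s : ℝ) + (m : ℝ)) = (N : ℝ) by rw [hNr]; ring]
  rw [show (s : ℝ) / N * (N.choose (t + 1) : ℝ) + ((s : ℝ) + m) / N * (N.choose t : ℝ)
      = ((s : ℝ) * (N.choose (t + 1) : ℝ) + ((s : ℝ) + m) * (N.choose t : ℝ)) / N by ring,
    div_mul_eq_mul_div, div_eq_div_iff hN1 hN0]
  linear_combination key

lemma raney_conv_zero (m r t : ℕ) :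
    ∑ i ∈ Finset.range (t + 1), raney m r i * raney m 0 (t - i) = raney m r t := by
  rw [Finset.sum_eq_single t]
  · simp [raney_zero]
  · intro i hi hne
    have hi' : i < t + 1 := Finset.mem_range.mp hi
    have : t - i ≠ 0 := by omega
    rw [raney_of_ne m 0 (t - i) this]
    simp
  · intro h
    exact absurd (Finset.self_mem_range_succ t) h

lemma raney_conv (m : ℕ) (hm : 1 ≤ m) (r : ℕ) :
    ∀ t s, ∑ i ∈ Finset.range (t + 1), raney m r i * raney m s (t - i)
      = raney m (r + s) t := by
  intro t
  induction t using Nat.strong_induction_on with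
  | _ t ih =>
    match t with
    | 0 => intro s; simp [raney_zero]
    | u + 1 =>
      intro s
      induction s with
      | zero => simpa using raney_conv_zero m r (u + 1)
      | succ s ihs =>
        have split : ∀ s' : ℕ,
            ∑ i ∈ Finset.range (u + 2), raney m r i * raney m s' (u + 1 - i)
            = (∑ i ∈ Finset.range (u + 1), raney m r i * raney m s' (u + 1 - i))
              + raney m r (u + 1) := by
          intro s'
          rw [Finset.sum_range_succ]
          simp [raney_zero]
        rw [split (s + 1), split s] at *
        have hrec : ∑ i ∈ Finset.range (u + 1), raney m r i * raney m (s + 1) (u + 1 - i)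
            = (∑ i ∈ Finset.range (u + 1), raney m r i * raney m s (u + 1 - i))
              + ∑ i ∈ Finset.range (u + 1), raney m r i * raney m (s + m) (u - i) := by
          rw [← Finset.sum_add_distrib]
          apply Finset.sum_congr rfl
          intro i hi
          have hi' : i ≤ u := by have := Finset.mem_range.mp hi; omega
          have e : u + 1 - i = (u - i) + 1 := by omega
          rw [e, raney_rec m s (u - i) hm, mul_add]
        have h2 : ∑ i ∈ Finset.range (u + 1), raney m r i * raney m (s + m) (u - i)
            = raney m (r + s + m) u := by
          rw [ih u (by omega) (s + m), show r + (s + m) = r + s + m by ring]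
        have h3 : raney m (r + (s + 1)) (u + 1)
            = raney m (r + s) (u + 1) + raney m (r + s + m) u := by
          rw [show r + (s + 1) = (r + s) + 1 by ring]
          exact raney_rec m (r + s) u hm
        rw [hrec, h2, h3]
        linarith [ihs]

lemma raney_nonneg (m s t : ℕ) : 0 ≤ raney m s t := by
  unfold raney
  split
  · norm_num
  · positivity

lemma raney_le_choose (m s t : ℕ) :
    raney m s t ≤ (Nat.choose (m * t + s) t : ℝ) := by
  rcases Nat.eq_zero_or_pos t with rfl | ht
  · simp [raney_zero]
  · rw [raney_of_ne m s t ht.ne']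
    apply mul_le_of_le_one_left (by positivity)
    apply div_le_one_of_le₀
    · have : (0:ℝ) ≤ (m:ℝ) * (t:ℝ) := by positivity
      linarith
    · positivity

lemma choose_bound (m : ℕ) (hm : 2 ≤ m) (s t : ℕ) :
    (Nat.choose (m * t + s) t : ℝ)
      ≤ ((m : ℝ) / ((m : ℝ) - 1)) ^ s * ((m : ℝ) ^ m / ((m : ℝ) - 1) ^ (m - 1)) ^ t := by
  have hm1 : (2 : ℝ) ≤ (m : ℝ) := by exact_mod_cast hm
  have hc : (0 : ℝ) < (m : ℝ) - 1 := by linarith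
  set c : ℝ := (m : ℝ) - 1 with hcdef
  have hx : (0 : ℝ) < 1 / c := by positivity
  set n : ℕ := m * t + s with hndef
  have htn : t ≤ n := by
    have := Nat.le_mul_of_pos_left t (show 0 < m by omega); omega
  have key : (Nat.choose n t : ℝ) * (1 / c) ^ t ≤ (1 / c + 1) ^ n := by
    rw [add_pow]
    have hmem : t ∈ Finset.range (n + 1) := Finset.mem_range.mpr (by omega)
    calc (Nat.choose n t : ℝ) * (1 / c) ^ t
        = (1 / c) ^ t * 1 ^ (n - t) * (Nat.choose n t : ℝ) := by ring
      _ ≤ _ := Finset.single_le_sum (f := fun k => (1 / c) ^ k * 1 ^ (n - k) * (Nat.choose n k : ℝ))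
          (fun k _ => by positivity) hmem
  have hcne : c ≠ 0 := ne_of_gt hc
  have h1c : 1 / c + 1 = (m : ℝ) / c := by
    rw [hcdef]; rw [hcdef] at hcne; field_simp; ring
  have key2 : (Nat.choose n t : ℝ) ≤ ((m : ℝ) / c) ^ n * c ^ t := by
    have := mul_le_mul_of_nonneg_right key (le_of_lt (pow_pos hc t))
    rw [h1c] at this
    calc (Nat.choose n t : ℝ) = (Nat.choose n t : ℝ) * (1 / c) ^ t * c ^ t := by
          rw [div_pow, one_pow]; field_simp
      _ ≤ ((m : ℝ) / c) ^ n * c ^ t := this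
  refine key2.trans (le_of_eq ?_)
  have hcms : c ^ m = c ^ (m - 1) * c := by
    rw [← pow_succ, Nat.sub_add_cancel (by omega)]
  have hkey : ((m : ℝ) / c) ^ m * c = (m : ℝ) ^ m / c ^ (m - 1) := by
    rw [div_pow, hcms]; field_simp
  rw [hndef, pow_add, pow_mul, ← hkey, mul_pow]
  ring

lemma raney_summable (m : ℕ) (hm : 2 ≤ m) (s : ℕ) (z : ℂ)
    (hz : ‖z‖ < ((m : ℝ) - 1) ^ (m - 1) / (m : ℝ) ^ m) :
    Summable (fun t : ℕ => ‖((raney m s t : ℝ) : ℂ) * z ^ t‖) := by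
  have hm1 : (2 : ℝ) ≤ (m : ℝ) := by exact_mod_cast hm
  have hc : (0 : ℝ) < (m : ℝ) - 1 := by linarith
  have hB : (0 : ℝ) < (m : ℝ) ^ m / ((m : ℝ) - 1) ^ (m - 1) := by positivity
  set q : ℝ := ‖z‖ * ((m : ℝ) ^ m / ((m : ℝ) - 1) ^ (m - 1)) with hqdef
  have hq0 : 0 ≤ q := by positivity
  have hρB : ((m : ℝ) - 1) ^ (m - 1) / (m : ℝ) ^ m * ((m : ℝ) ^ m / ((m : ℝ) - 1) ^ (m - 1)) = 1 := by
    field_simp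
  have hq1 : q < 1 := by
    calc q < ((m : ℝ) - 1) ^ (m - 1) / (m : ℝ) ^ m * ((m : ℝ) ^ m / ((m : ℝ) - 1) ^ (m - 1)) :=
          mul_lt_mul_of_pos_right hz hB
      _ = 1 := hρB
  have hgeo : Summable (fun t : ℕ => ((m : ℝ) / ((m : ℝ) - 1)) ^ s * q ^ t) :=
    (summable_geometric_of_lt_one hq0 hq1).mul_left _
  refine Summable.of_nonneg_of_le (fun t => norm_nonneg _) (fun t => ?_) hgeo
  rw [norm_mul, norm_pow, Complex.norm_real, Real.norm_eq_abs,
    abs_of_nonneg (raney_nonneg m s t)]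
  calc raney m s t * ‖z‖ ^ t
      ≤ (((m : ℝ) / ((m : ℝ) - 1)) ^ s * ((m : ℝ) ^ m / ((m : ℝ) - 1) ^ (m - 1)) ^ t)
          * ‖z‖ ^ t :=
        mul_le_mul_of_nonneg_right ((raney_le_choose m s t).trans (choose_bound m hm s t))
          (by positivity)
    _ = ((m : ℝ) / ((m : ℝ) - 1)) ^ s * q ^ t := by rw [hqdef, mul_pow]; ring

lemma fcInt_eq_raney (m : ℕ) (hm : 2 ≤ m) (t : ℕ) :
    fcInt m t = ((raney m 1 t : ℝ) : ℂ) := by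
  cases t with
  | zero => simp [fcInt, raney_zero]
  | succ t =>
    rw [raney_of_ne m 1 (t + 1) (Nat.succ_ne_zero t)]
    unfold fcInt
    obtain ⟨N, hN⟩ : ∃ N, N = m * (t + 1) := ⟨_, rfl⟩
    have htN : t + 1 ≤ N := by
      have := Nat.le_mul_of_pos_left (t + 1) (show 0 < m by omega); omega
    have hNr : (N : ℂ) = (m : ℂ) * ((t : ℂ) + 1) := by rw [hN]; push_cast; ring
    have h1 : ((N + 1).choose (t + 1) : ℂ) = (N.choose t : ℂ) + (N.choose (t + 1) : ℂ) := by
      rw [Nat.choose_succ_succ]; push_cast; ring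
    have h2 : (N.choose (t + 1) : ℂ) * ((t : ℂ) + 1) = (N.choose t : ℂ) * ((N : ℂ) - t) := by
      have h2' := Nat.choose_succ_right_eq N t
      have := congrArg (Nat.cast : ℕ → ℂ) h2'
      push_cast [Nat.cast_sub (show t ≤ N by omega)] at this
      linear_combination this
    have hd1 : ((m : ℂ) - 1) * ((t : ℂ) + 1) + 1 = (N : ℂ) - t := by rw [hNr]; ring
    have hsub : (N : ℂ) - (t : ℂ) = ((N - t : ℕ) : ℂ) := by
      push_cast [Nat.cast_sub (show t ≤ N by omega)]; ring
    have hd1ne : (N : ℂ) - (t : ℂ) ≠ 0 := by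
      rw [hsub]; exact Nat.cast_ne_zero.mpr (by omega)
    have hd2ne : (N : ℂ) + 1 ≠ 0 := by
      have : ((N + 1 : ℕ) : ℂ) ≠ 0 := Nat.cast_ne_zero.mpr (by omega)
      push_cast at this; exact this
    rw [show m * (t + 1) + 1 = N + 1 by rw [hN], ← hN]
    push_cast
    rw [hd1, show (m : ℂ) * ((t : ℂ) + 1) + 1 = (N : ℂ) + 1 by rw [hNr]]
    rw [div_eq_iff hd1ne]
    rw [show (1 : ℂ) / ((N : ℂ) + 1) * ((N + 1).choose (t + 1) : ℂ) * ((N : ℂ) - t)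
        = (((N + 1).choose (t + 1) : ℂ) * ((N : ℂ) - t)) / ((N : ℂ) + 1) by ring]
    rw [eq_div_iff hd2ne]
    linear_combination (-((N : ℂ) - t)) * h1 + h2

lemma fcInt_succ_eq_raney (m : ℕ) (hm : 2 ≤ m) (t : ℕ) :
    fcInt m (t + 1) = ((raney m m t : ℝ) : ℂ) := by
  rw [raney_formula m m t (by omega)]
  unfold fcInt
  obtain ⟨N, hN⟩ : ∃ N, N = m * t + m := ⟨_, rfl⟩
  have htN : t + 1 ≤ N := by
    have h1 := Nat.le_mul_of_pos_left (t + 1) (show 0 < m by omega)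
    have h2 : m * (t + 1) = m * t + m := by ring
    omega
  have hNr : (N : ℂ) = (m : ℂ) * (t : ℂ) + m := by rw [hN]; push_cast; ring
  have h2 : (N.choose (t + 1) : ℂ) * ((t : ℂ) + 1) = (N.choose t : ℂ) * ((N : ℂ) - t) := by
    have h2' := Nat.choose_succ_right_eq N t
    have := congrArg (Nat.cast : ℕ → ℂ) h2'
    push_cast [Nat.cast_sub (show t ≤ N by omega)] at this
    linear_combination this
  have hsub : (N : ℂ) - (t : ℂ) = ((N - t : ℕ) : ℂ) := by
    push_cast [Nat.cast_sub (show t ≤ N by omega)]; ring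
  have hd1ne : (N : ℂ) - (t : ℂ) ≠ 0 := by
    rw [hsub]; exact Nat.cast_ne_zero.mpr (by omega)
  have hdNne : (N : ℂ) ≠ 0 := Nat.cast_ne_zero.mpr (by omega)
  rw [show m * (t + 1) = N by rw [hN]; ring, show m * t + m = N from hN.symm]
  push_cast
  rw [show ((m : ℂ) - 1) * ((t : ℂ) + 1) + 1 = (N : ℂ) - t by rw [hNr]; ring,
    show (m : ℂ) * (t : ℂ) + m = (N : ℂ) by rw [hNr]]
  rw [div_eq_iff hd1ne]
  rw [show (m : ℂ) / (N : ℂ) * (N.choose t : ℂ) * ((N : ℂ) - t)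
      = ((m : ℂ) * (N.choose t : ℂ) * ((N : ℂ) - t)) / (N : ℂ) by ring]
  rw [eq_div_iff hdNne]
  linear_combination (m : ℂ) * h2 + (N.choose (t + 1) : ℂ) * hNr


lemma raney_tsum_pow (m : ℕ) (hm : 2 ≤ m) (z : ℂ)
    (hz : ‖z‖ < ((m : ℝ) - 1) ^ (m - 1) / (m : ℝ) ^ m) :
    ∀ k, 1 ≤ k →
      (∑' t : ℕ, ((raney m 1 t : ℝ) : ℂ) * z ^ t) ^ k
        = ∑' t : ℕ, ((raney m k t : ℝ) : ℂ) * z ^ t := by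
  intro k hk
  induction k with
  | zero => omega
  | succ k ihk =>
    rcases Nat.eq_zero_or_pos k with rfl | hk'
    · simp
    · rw [pow_succ, ihk hk',
        tsum_mul_tsum_eq_tsum_sum_antidiagonal_of_summable_norm
          (raney_summable m hm k z hz) (raney_summable m hm 1 z hz)]
      apply tsum_congr
      intro n
      rw [Finset.Nat.sum_antidiagonal_eq_sum_range_succ_mk]
      have h : ∀ i ∈ Finset.range (n + 1),
          (((raney m k i : ℝ) : ℂ) * z ^ i) * (((raney m 1 (n - i) : ℝ) : ℂ) * z ^ (n - i))
            = ((raney m k i * raney m 1 (n - i) : ℝ) : ℂ) * z ^ n := by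
        intro i hi
        have hi' : i ≤ n := by have := Finset.mem_range.mp hi; omega
        have hz2 : z ^ i * z ^ (n - i) = z ^ n := by
          rw [← pow_add]; congr 1; omega
        push_cast
        rw [← hz2]; ring
      rw [Finset.sum_congr rfl h, ← Finset.sum_mul, ← Complex.ofReal_sum,
        raney_conv m (by omega) k n 1]

/-- For `m ≥ 2` and `|z| < (m-1)^{m-1}/m^m`, the series `f(z) = ∑_t A_t(m,1) z^t`
converges absolutely and its sum satisfies `f = 1 + z f^m`. -/
theorem fussCatalan_genfun_eq (m : ℕ) (hm : 2 ≤ m) (z : ℂ)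
    (hz : ‖z‖ < ((m : ℝ) - 1) ^ (m - 1) / (m : ℝ) ^ m) :
    Summable (fun t : ℕ => ‖fcInt m t * z ^ t‖) ∧
      (∑' t : ℕ, fcInt m t * z ^ t) = 1 + z * (∑' t : ℕ, fcInt m t * z ^ t) ^ m := by
  have hfc : ∀ t : ℕ, fcInt m t * z ^ t = ((raney m 1 t : ℝ) : ℂ) * z ^ t := fun t => by
    rw [fcInt_eq_raney m hm t]
  have hsum1 := raney_summable m hm 1 z hz
  have hS : Summable (fun t : ℕ => ‖fcInt m t * z ^ t‖) := by
    refine hsum1.congr fun t => ?_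
    rw [← hfc t]
  refine ⟨hS, ?_⟩
  have hfeq : (∑' t : ℕ, fcInt m t * z ^ t) = ∑' t : ℕ, ((raney m 1 t : ℝ) : ℂ) * z ^ t :=
    tsum_congr hfc
  rw [hfeq, raney_tsum_pow m hm z hz m (by omega), ← tsum_mul_left]
  have hsummable : Summable (fun t : ℕ => ((raney m 1 t : ℝ) : ℂ) * z ^ t) :=
    (raney_summable m hm 1 z hz).of_norm
  rw [Summable.tsum_eq_zero_add hsummable]
  congr 1
  · simp [raney_zero]
  · apply tsum_congr
    intro t
    have hr : ((raney m 1 (t + 1) : ℝ) : ℂ) = ((raney m m t : ℝ) : ℂ) := by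
      rw [← fcInt_eq_raney m hm (t + 1), fcInt_succ_eq_raney m hm t]
    rw [hr]; ring
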